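/- Let (X,d) be a complete bead space and let F be a multivalued mapping from X to X with compact values, with F(X) = ⋃_{x∈X} F(x) bounded, and nonexpansive, i.e. D(F(y),F(x)) ≤ d(y,x) for all x,y ∈ X. If there exists a sequence (x_n) in X such that lim_n d(F(x_n),x_n) = 0, then F has a fixed point. -/
import Mathlib


open Metric Filter

/-- A metric space `X` is a *bead space* if for every `r > 0` and `β > 0` there exists a
`δ > 0` such that for all `x y` with `d(x,y) ≥ β` there is a `z` with
`B(x,r+δ) ∩ B(y,r+δ) ⊆ B(z,r−δ)` (closed balls). -/
def IsBeadSpace (X : Type*) [MetricSpace X] : Prop :=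
  ∀ r : ℝ, 0 < r → ∀ β : ℝ, 0 < β → ∃ δ : ℝ, 0 < δ ∧
    ∀ x y : X, β ≤ dist x y → ∃ z : X,
      Metric.closedBall x (r + δ) ∩ Metric.closedBall y (r + δ) ⊆ Metric.closedBall z (r - δ)

/-- **Theorem 2.7.** Let `(X,d)` be a complete bead space and `F` a bounded,
compact-valued (nonempty values) nonexpansive multivalued mapping from `X` to `X`
(nonexpansive in the sense of the Hausdorff distance). If there exists a sequence `(xₙ)`
with `d(F(xₙ),xₙ) → 0`, then `F` has a fixed point. -/
theorem fixed_point_of_nonexpansive_bead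
    {X : Type*} [MetricSpace X] [CompleteSpace X] (hbead : IsBeadSpace X)
    (F : X → Set X) (hFne : ∀ x, (F x).Nonempty) (hFcpt : ∀ x, IsCompact (F x))
    (hFbdd : Bornology.IsBounded (⋃ x : X, F x))
    (hnonexp : ∀ x y : X, hausdorffDist (F y) (F x) ≤ dist y x)
    (hseq : ∃ u : ℕ → X, Tendsto (fun n => infDist (u n) (F (u n))) atTop (nhds 0)) :
    ∃ x : X, x ∈ F x := by
  classical
  obtain ⟨u, hu⟩ := hseq
  have : Nonempty X := ⟨u 0⟩
  have hFb : ∀ x : X, Bornology.IsBounded (F x) := fun x =>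
    hFbdd.subset (Set.subset_iUnion F x)
  have hne_top : ∀ x y : X, EMetric.hausdorffEdist (F x) (F y) ≠ ⊤ := fun x y =>
    hausdorffEdist_ne_top_of_nonempty_of_bounded (hFne x) (hFne y) (hFb x) (hFb y)
  -- replace `u` with nearest points in `F (u n)`; these lie in the bounded set `⋃ F`
  have hy : ∀ n, ∃ y ∈ F (u n), infDist (u n) (F (u n)) = dist (u n) y := fun n =>
    (hFcpt (u n)).exists_infDist_eq_dist (hFne (u n)) (u n)
  choose x hxF hxd using hy
  have hxU : ∀ n, x n ∈ ⋃ z : X, F z := fun n => Set.mem_iUnion.2 ⟨u n, hxF n⟩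
  have hx0 : Tendsto (fun n => infDist (x n) (F (x n))) atTop (nhds 0) := by
    apply squeeze_zero (fun n => infDist_nonneg) _ hu
    intro n
    calc infDist (x n) (F (x n)) ≤ hausdorffDist (F (u n)) (F (x n)) :=
          infDist_le_hausdorffDist_of_mem (hxF n) (hne_top _ _)
      _ ≤ dist (u n) (x n) := hnonexp (x n) (u n)
      _ = infDist (u n) (F (u n)) := (hxd n).symm
  -- a uniform bound on distances to the sequence
  obtain ⟨C, hC⟩ := Metric.isBounded_iff.1 hFbdd
  have hbound : ∀ z : X, ∀ n, dist z (x n) ≤ dist z (x 0) + C := fun z n =>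
    (dist_triangle z (x 0) (x n)).trans (by
      have := hC (hxU 0) (hxU n); linarith)
  -- the ultrafilter along which we take asymptotic radii
  set U : Ultrafilter ℕ := hyperfilter ℕ with hUdef
  have hU : (U : Filter ℕ) ≤ atTop := Nat.hyperfilter_le_atTop
  -- define r z = lim along U of dist z (x n)
  have hr : ∀ z : X, ∃ c : ℝ, Tendsto (fun n => dist z (x n)) (U : Filter ℕ) (nhds c) := by
    intro z
    have hmem : ∀ n, dist z (x n) ∈ Set.Icc (0 : ℝ) (dist z (x 0) + C) := fun n =>
      ⟨dist_nonneg, hbound z n⟩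
    obtain ⟨c, -, hc⟩ :=
      (isCompact_Icc (a := (0:ℝ)) (b := dist z (x 0) + C)).ultrafilter_le_nhds
        (U.map fun n => dist z (x n))
        (by
          rw [Ultrafilter.coe_map, le_principal_iff, mem_map]
          exact Filter.univ_mem' hmem)
    rw [Ultrafilter.coe_map] at hc
    exact ⟨c, hc⟩
  choose r hrt using hr
  have hr0 : ∀ z, 0 ≤ r z := fun z =>
    ge_of_tendsto (hrt z) (Eventually.of_forall fun n => dist_nonneg)
  set ρ : ℝ := ⨅ z, r z with hρdef
  have hbddr : BddBelow (Set.range r) := ⟨0, by rintro _ ⟨z, rfl⟩; exact hr0 z⟩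
  have hρle : ∀ z, ρ ≤ r z := fun z => ciInf_le hbddr z
  have hρ0 : 0 ≤ ρ := le_ciInf hr0
  -- r is 1-Lipschitz (one-sided suffices)
  have hlip : ∀ z w : X, r z ≤ dist z w + r w := fun z w =>
    le_of_tendsto_of_tendsto' (hrt z) (tendsto_const_nhds.add (hrt w))
      fun n => dist_triangle z w (x n)
  -- key uniform-convexity-type consequence of the bead property
  have key : ∀ β : ℝ, 0 < β → ∃ δ : ℝ, 0 < δ ∧
      ∀ z w : X, r z ≤ ρ + δ → r w ≤ ρ + δ → dist z w < β := by
    intro β hβ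
    rcases eq_or_lt_of_le hρ0 with hρ | hρ
    · refine ⟨β/3, by positivity, fun z w hz hw => ?_⟩
      have hd : dist z w ≤ r z + r w := by
        refine le_of_tendsto_of_tendsto'
          (tendsto_const_nhds : Tendsto (fun _ : ℕ => dist z w) (U : Filter ℕ) (nhds (dist z w)))
          ((hrt z).add (hrt w)) fun n => ?_
        calc dist z w ≤ dist z (x n) + dist (x n) w := dist_triangle _ _ _
          _ = dist z (x n) + dist w (x n) := by rw [dist_comm (x n) w]
      rw [← hρ] at hz hw
      linarith
    · obtain ⟨δ, hδ, hbd⟩ := hbead ρ hρ β hβ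
      refine ⟨δ/2, by positivity, fun z w hz hw => ?_⟩
      by_contra hcon
      push_neg at hcon
      obtain ⟨z', hz'⟩ := hbd z w hcon
      have h1 : ∀ᶠ n in (U : Filter ℕ), dist z (x n) < ρ + δ :=
        (hrt z).eventually_lt_const (by linarith)
      have h2 : ∀ᶠ n in (U : Filter ℕ), dist w (x n) < ρ + δ :=
        (hrt w).eventually_lt_const (by linarith)
      have hev : ∀ᶠ n in (U : Filter ℕ), dist z' (x n) ≤ ρ - δ := by
        filter_upwards [h1, h2] with n hn1 hn2
        have hmem : x n ∈ Metric.closedBall z (ρ + δ) ∩ Metric.closedBall w (ρ + δ) :=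
          ⟨by rw [mem_closedBall, dist_comm]; exact hn1.le,
           by rw [mem_closedBall, dist_comm]; exact hn2.le⟩
        have := hz' hmem
        rw [mem_closedBall, dist_comm] at this
        exact this
      have hle : r z' ≤ ρ - δ := le_of_tendsto (hrt z') hev
      have := hρle z'
      linarith
  -- approximate minimizers form a Cauchy sequence
  have hzk : ∀ k : ℕ, ∃ z : X, r z < ρ + 1 / ((k : ℝ) + 1) := by
    intro k
    apply exists_lt_of_ciInf_lt
    have : (0:ℝ) < 1 / ((k : ℝ) + 1) := by positivity
    linarith
  choose zs hzs using hzk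
  have honediv : ∀ {m k : ℕ}, k ≤ m → 1 / ((m : ℝ) + 1) ≤ 1 / ((k : ℝ) + 1) := by
    intro m k hkm
    apply one_div_le_one_div_of_le (by positivity)
    have : (k : ℝ) ≤ m := Nat.cast_le.2 hkm
    linarith
  have hcauchy : CauchySeq zs := by
    rw [Metric.cauchySeq_iff]
    intro ε hε
    obtain ⟨δ, hδ, hkey⟩ := key ε hε
    obtain ⟨K, hK⟩ := exists_nat_one_div_lt (ε := δ) hδ
    refine ⟨K, fun m hm n hn => hkey _ _ ?_ ?_⟩
    · have := honediv hm; have := hzs m; linarith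
    · have := honediv hn; have := hzs n; linarith
  obtain ⟨z0, hz0⟩ := cauchySeq_tendsto_of_complete hcauchy
  -- the asymptotic center z0 satisfies r z0 = ρ
  have hrz0 : r z0 = ρ := by
    refine le_antisymm ?_ (hρle z0)
    have h1 : ∀ k, r z0 ≤ dist z0 (zs k) + (ρ + 1 / ((k : ℝ) + 1)) := fun k =>
      (hlip z0 (zs k)).trans (by have := hzs k; linarith)
    have hd : Tendsto (fun k => dist z0 (zs k)) atTop (nhds 0) := by
      have := Filter.Tendsto.dist
        (tendsto_const_nhds : Tendsto (fun _ : ℕ => z0) atTop (nhds z0)) hz0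
      simpa using this
    have h2 : Tendsto (fun k : ℕ => dist z0 (zs k) + (ρ + 1 / ((k : ℝ) + 1))) atTop
        (nhds (0 + (ρ + 0))) :=
      hd.add (tendsto_const_nhds.add tendsto_one_div_add_atTop_nhds_zero_nat)
    have := le_of_tendsto_of_tendsto'
      (tendsto_const_nhds : Tendsto (fun _ : ℕ => r z0) atTop (nhds (r z0))) h2 h1
    linarith
  -- pick nearest points in F z0 and take their ultrafilter limit
  have hw : ∀ n, ∃ y ∈ F z0, infDist (x n) (F z0) = dist (x n) y := fun n =>
    (hFcpt z0).exists_infDist_eq_dist (hFne z0) (x n)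
  choose w hwF hwd using hw
  obtain ⟨w0, hw0F, hw0t⟩ :=
    (hFcpt z0).ultrafilter_le_nhds (U.map w)
      (by
        rw [Ultrafilter.coe_map, le_principal_iff, mem_map]
        exact Filter.univ_mem' fun n => hwF n)
  rw [Ultrafilter.coe_map] at hw0t
  have hwt : Tendsto w (U : Filter ℕ) (nhds w0) := hw0t
  -- r w0 ≤ ρ
  have hest : ∀ n, dist w0 (x n) ≤
      dist w0 (w n) + (infDist (x n) (F (x n)) + dist (x n) z0) := by
    intro n
    have h1 : dist w0 (x n) ≤ dist w0 (w n) + dist (w n) (x n) := dist_triangle _ _ _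
    have h2 : dist (w n) (x n) = infDist (x n) (F z0) := by
      rw [dist_comm]; exact (hwd n).symm
    have h3 : infDist (x n) (F z0) ≤
        infDist (x n) (F (x n)) + hausdorffDist (F (x n)) (F z0) :=
      infDist_le_infDist_add_hausdorffDist (hne_top _ _)
    have h4 : hausdorffDist (F (x n)) (F z0) ≤ dist (x n) z0 := hnonexp z0 (x n)
    linarith
  have htend : Tendsto (fun n => dist w0 (w n) + (infDist (x n) (F (x n)) + dist (x n) z0))
      (U : Filter ℕ) (nhds (0 + (0 + r z0))) := by
    refine Tendsto.add ?_ (Tendsto.add (hx0.mono_left hU) ?_)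
    · have := Filter.Tendsto.dist
        (tendsto_const_nhds : Tendsto (fun _ : ℕ => w0) (U : Filter ℕ) (nhds w0)) hwt
      simpa using this
    · exact (hrt z0).congr fun n => dist_comm z0 (x n)
  have hrw0 : r w0 ≤ ρ := by
    have := le_of_tendsto_of_tendsto' (hrt w0) htend hest
    rw [hrz0] at this
    linarith
  -- uniqueness of the asymptotic center forces w0 = z0
  have : w0 = z0 := by
    by_contra hne
    have hβ : 0 < dist w0 z0 := dist_pos.2 hne
    obtain ⟨δ, hδ, hkey⟩ := key (dist w0 z0) hβ
    have := hkey w0 z0 (by linarith) (by rw [hrz0]; linarith)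
    exact lt_irrefl _ this
  exact ⟨z0, this ▸ hw0F⟩
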